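/- Fix a real V∈(0,1], a real S_T≥0, and an integer B≥1. Then for every real x ∈ [0, 1/(e−1)]: Σ_{r=0}^{B} binom(B,r)·x^{r}·(V/(1+V·r·S_T))·[ (r·(1+x) − x·B)² − r·(1+x) + (r·(1+x) − x·B)·x ] ≥ 0. -/
import Mathlib

private noncomputable def Af (m : ℕ) (x : ℝ) (k : ℕ) : ℝ :=
  ((m : ℝ) + 2) * ((m : ℝ) + 1) * x ^ (k + 2) * ((m.choose k : ℕ) : ℝ)

private noncomputable def nuf (V ST : ℝ) (k : ℕ) : ℝ := V / (1 + V * (k : ℝ) * ST)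

private lemma id1 (m i : ℕ) :
    (((m+2).choose (i+2) : ℕ) : ℝ) * (((i:ℝ)+2)*((i:ℝ)+1))
      = ((m:ℝ)+2)*((m:ℝ)+1)*((m.choose i : ℕ) : ℝ) := by
  have a : ((m:ℝ)+2) * (((m+1).choose (i+1) : ℕ) : ℝ) = (((m+2).choose (i+2) : ℕ):ℝ) * ((i:ℝ)+2) := by
    exact_mod_cast Nat.add_one_mul_choose_eq (m+1) (i+1)
  have b : ((m:ℝ)+1) * ((m.choose i : ℕ) : ℝ) = (((m+1).choose (i+1) : ℕ):ℝ) * ((i:ℝ)+1) := by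
    exact_mod_cast Nat.add_one_mul_choose_eq m i
  linear_combination (-((i:ℝ)+1)) * a + (-((m:ℝ)+2)) * b

private lemma id2 (m i : ℕ) (hi : i ≤ m) :
    (((m+2).choose (i+2) : ℕ) : ℝ) * (((i:ℝ)+2)*((m:ℝ)-i))
      = ((m:ℝ)+2)*((m:ℝ)+1)*((m.choose (i+1) : ℕ) : ℝ) := by
  have a : ((m:ℝ)+2) * (((m+1).choose (i+1) : ℕ) : ℝ) = (((m+2).choose (i+2) : ℕ):ℝ) * ((i:ℝ)+2) := by
    exact_mod_cast Nat.add_one_mul_choose_eq (m+1) (i+1)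
  have b0 := Nat.choose_succ_right_eq (m+1) (i+1)
  have hsub : (m+1) - (i+1) = m - i := by omega
  rw [hsub] at b0
  have b : (((m+1).choose (i+2) : ℕ) : ℝ) * ((i:ℝ)+2) = (((m+1).choose (i+1) : ℕ):ℝ) * ((m:ℝ)-i) := by
    have := congrArg (Nat.cast : ℕ → ℝ) b0
    push_cast [Nat.cast_sub hi] at this
    linarith [this]
  have c : ((m:ℝ)+1) * ((m.choose (i+1) : ℕ) : ℝ) = (((m+1).choose (i+2) : ℕ):ℝ) * ((i:ℝ)+2) := by
    exact_mod_cast Nat.add_one_mul_choose_eq m (i+1)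
  linear_combination (-((m:ℝ)-i)) * a + (-((m:ℝ)+2)) * b + (-((m:ℝ)+2)) * c

private lemma id3 (m i : ℕ) (hi : i + 1 ≤ m) :
    (((m+2).choose (i+2) : ℕ) : ℝ) * (((m:ℝ)-i)*((m:ℝ)-i-1))
      = ((m:ℝ)+2)*((m:ℝ)+1)*((m.choose (i+2) : ℕ) : ℝ) := by
  have r1n := Nat.choose_succ_right_eq (m+2) (i+2)
  have h1 : (m+2) - (i+2) = m - i := by omega
  rw [h1] at r1n
  have r1 : (((m+2).choose (i+3) : ℕ):ℝ) * ((i:ℝ)+3) = (((m+2).choose (i+2) : ℕ):ℝ) * ((m:ℝ)-i) := by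
    have := congrArg (Nat.cast : ℕ → ℝ) r1n
    push_cast [Nat.cast_sub (le_trans (Nat.le_succ i) hi)] at this
    linarith [this]
  have r2n := Nat.choose_succ_right_eq (m+2) (i+3)
  have h2 : (m+2) - (i+3) = m - (i+1) := by omega
  rw [h2] at r2n
  have r2 : (((m+2).choose (i+4) : ℕ):ℝ) * ((i:ℝ)+4) = (((m+2).choose (i+3) : ℕ):ℝ) * ((m:ℝ)-i-1) := by
    have := congrArg (Nat.cast : ℕ → ℝ) r2n
    push_cast [Nat.cast_sub hi] at this
    linarith [this]
  have r3 : ((m:ℝ)+2) * (((m+1).choose (i+3) : ℕ) : ℝ) = (((m+2).choose (i+4) : ℕ):ℝ) * ((i:ℝ)+4) := by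
    exact_mod_cast Nat.add_one_mul_choose_eq (m+1) (i+3)
  have r4 : ((m:ℝ)+1) * ((m.choose (i+2) : ℕ) : ℝ) = (((m+1).choose (i+3) : ℕ):ℝ) * ((i:ℝ)+3) := by
    exact_mod_cast Nat.add_one_mul_choose_eq m (i+2)
  linear_combination (-((m:ℝ)-i-1)) * r1 + (-((i:ℝ)+3)) * r2 + (-((i:ℝ)+3)) * r3 + (-((m:ℝ)+2)) * r4

private lemma shift1 (n : ℕ) (g : ℕ → ℝ) (hg : g (n+1) = 0) :
    ∑ i ∈ Finset.range (n+1), g (i+1) + g 0 = ∑ k ∈ Finset.range (n+1), g k := by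
  have h := Finset.sum_range_succ' g (n+1)
  rw [Finset.sum_range_succ g (n+1), hg] at h
  linarith

private lemma shift2 (n : ℕ) (g : ℕ → ℝ) (hg1 : g (n+1) = 0) (hg2 : g (n+2) = 0) :
    ∑ i ∈ Finset.range (n+1), g (i+2) + g 1 + g 0 = ∑ k ∈ Finset.range (n+1), g k := by
  have a1 : ∑ i ∈ Finset.range (n+3), g i = ∑ i ∈ Finset.range (n+1), g i := by
    rw [Finset.sum_range_succ, Finset.sum_range_succ, hg1, hg2]
    ring
  have a2 : ∑ i ∈ Finset.range (n+3), g i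
      = ∑ i ∈ Finset.range (n+1), g (i+2) + g 1 + g 0 := by
    rw [Finset.sum_range_succ', Finset.sum_range_succ']
  linarith

private lemma convex_nuf (V ST : ℝ) (hV0 : 0 < V) (hST : 0 ≤ ST) (k : ℕ) :
    0 ≤ nuf V ST k - 2 * nuf V ST (k+1) + nuf V ST (k+2) := by
  simp only [nuf]
  have key : V / (1 + V * (k:ℝ) * ST) - 2 * (V / (1 + V * ((k+1:ℕ):ℝ) * ST)) + V / (1 + V * ((k+2:ℕ):ℝ) * ST)
      = 2 * V * (V*ST)^2 / ((1 + V * (k:ℝ) * ST) * ((1 + V * ((k:ℝ)+1) * ST) * (1 + V * ((k:ℝ)+2) * ST))) := by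
    have d0 : (0:ℝ) < 1 + V * k * ST := by positivity
    have d1 : (0:ℝ) < 1 + V * ((k:ℝ)+1) * ST := by positivity
    have d2 : (0:ℝ) < 1 + V * ((k:ℝ)+2) * ST := by positivity
    push_cast
    field_simp
    ring
  rw [key]
  positivity

private lemma Af_nonneg (m : ℕ) (x : ℝ) (hx0 : 0 ≤ x) (k : ℕ) : 0 ≤ Af m x k := by
  unfold Af
  have h1 : (0:ℝ) ≤ ((m:ℝ)+2)*((m:ℝ)+1) := by positivity
  exact mul_nonneg (mul_nonneg h1 (pow_nonneg hx0 _)) (Nat.cast_nonneg _)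

private lemma main_aux (V ST x : ℝ) (m : ℕ) :
    (∑ r ∈ Finset.range (m+2+1),
      (((m+2).choose r : ℕ) : ℝ) * x ^ r * (V / (1 + V * (r : ℝ) * ST)) *
        (((r : ℝ) * (1 + x) - x * ((m+2 : ℕ) : ℝ)) ^ 2 - (r : ℝ) * (1 + x) +
          ((r : ℝ) * (1 + x) - x * ((m+2 : ℕ) : ℝ)) * x))
    = ∑ k ∈ Finset.range (m+1),
        Af m x k * (nuf V ST k - 2 * nuf V ST (k+1) + nuf V ST (k+2)) := by
  set F : ℕ → ℝ := fun r =>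
      (((m+2).choose r : ℕ) : ℝ) * x ^ r * (V / (1 + V * (r : ℝ) * ST)) *
        (((r : ℝ) * (1 + x) - x * ((m+2 : ℕ) : ℝ)) ^ 2 - (r : ℝ) * (1 + x) +
          ((r : ℝ) * (1 + x) - x * ((m+2 : ℕ) : ℝ)) * x) with hF
  have peel : ∑ r ∈ Finset.range (m+2+1), F r
      = ∑ i ∈ Finset.range (m+1), F (i+2) + F 1 + F 0 := by
    rw [Finset.sum_range_succ', Finset.sum_range_succ']
  rw [peel]
  -- per-term key identity
  have key : ∀ i ∈ Finset.range (m+1), F (i+2)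
      = (Af m x i * nuf V ST (i+2) - 2*(Af m x (i+1) * nuf V ST (i+2)))
          + Af m x (i+2) * nuf V ST (i+2) := by
    intro i hi
    have him : i ≤ m := by
      have := Finset.mem_range.mp hi; omega
    rcases eq_or_lt_of_le him with heq | hlt
    · -- i = m case
      have c1 : (m+2).choose (i+2) = 1 := by rw [heq]; exact Nat.choose_self _
      have c2 : m.choose i = 1 := by rw [heq]; exact Nat.choose_self _
      have c3 : m.choose (i+1) = 0 := by rw [heq]; exact Nat.choose_succ_self _
      have c4 : m.choose (i+2) = 0 := by rw [heq]; exact Nat.choose_eq_zero_of_lt (by omega)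
      simp only [hF, Af, nuf, c1, c2, c3, c4]
      push_cast
      rw [heq]
      ring
    · have hi1 : i + 1 ≤ m := hlt
      have e1 := id1 m i
      have e2 := id2 m i him
      have e3 := id3 m i hi1
      simp only [hF, Af, nuf]
      push_cast
      push_cast at e1 e2 e3
      linear_combination (V / (1 + V * ((i:ℝ)+2) * ST)) *
        (x^(i+2) * e1 - 2*x^(i+3) * e2 + x^(i+4) * e3)
  rw [Finset.sum_congr rfl key]
  -- edge terms
  have hf1 : F 1 = (Af m x 1 * nuf V ST 1 - 2*(Af m x 0 * nuf V ST 1)) := by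
    have c1 : (m+2).choose 1 = m+2 := Nat.choose_one_right _
    have c2 : m.choose 1 = m := Nat.choose_one_right _
    have c3 : m.choose 0 = 1 := Nat.choose_zero_right _
    simp only [hF, Af, nuf, c1, c2, c3]
    push_cast
    ring
  have hf0 : F 0 = Af m x 0 * nuf V ST 0 := by
    have c1 : (m+2).choose 0 = 1 := Nat.choose_zero_right _
    have c3 : m.choose 0 = 1 := Nat.choose_zero_right _
    simp only [hF, Af, nuf, c1, c3]
    push_cast
    ring
  rw [hf1, hf0]
  -- vanishing of Af beyond the top index
  have hA1 : Af m x (m+1) = 0 := by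
    simp [Af, Nat.choose_succ_self]
  have hA2 : Af m x (m+2) = 0 := by
    have : m.choose (m+2) = 0 := Nat.choose_eq_zero_of_lt (by omega)
    simp [Af, this]
  -- shifted sums
  have s1 : ∑ i ∈ Finset.range (m+1), Af m x (i+1) * nuf V ST (i+2) + Af m x 0 * nuf V ST 1
      = ∑ k ∈ Finset.range (m+1), Af m x k * nuf V ST (k+1) := by
    have := shift1 m (fun k => Af m x k * nuf V ST (k+1)) (by simp [hA1])
    simpa using this
  have s2 : ∑ i ∈ Finset.range (m+1), Af m x (i+2) * nuf V ST (i+2) + Af m x 1 * nuf V ST 1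
        + Af m x 0 * nuf V ST 0
      = ∑ k ∈ Finset.range (m+1), Af m x k * nuf V ST k := by
    have := shift2 m (fun k => Af m x k * nuf V ST k) (by simp [hA1]) (by simp [hA2])
    simpa using this
  -- split all the sums and finish linearly
  have expand : ∀ k ∈ Finset.range (m+1),
      Af m x k * (nuf V ST k - 2 * nuf V ST (k+1) + nuf V ST (k+2))
        = (Af m x k * nuf V ST k - 2*(Af m x k * nuf V ST (k+1))) + Af m x k * nuf V ST (k+2) :=
    fun k _ => by ring
  rw [Finset.sum_congr rfl expand]
  rw [Finset.sum_add_distrib, Finset.sum_sub_distrib, Finset.sum_add_distrib,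
    Finset.sum_sub_distrib, ← Finset.mul_sum, ← Finset.mul_sum]
  linarith [s1, s2]

/-- the key combinatorial inequality `x²·s_B(x,S_T) ≥ 0`:
for `V ∈ (0,1]`, `S_T ≥ 0`, `B ≥ 1` and `x ∈ [0, 1/(e−1)]`,
`Σ_{r=0}^{B} binom(B,r)·x^r·ν̂(V,r·S_T)·[(r(1+x)−xB)² − r(1+x) + (r(1+x)−xB)·x] ≥ 0`. -/
theorem stmt_19 (V ST : ℝ) (hV0 : 0 < V) (hV1 : V ≤ 1) (hST : 0 ≤ ST)
    (B : ℕ) (hB : 1 ≤ B) (x : ℝ)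
    (hx : x ∈ Set.Icc (0 : ℝ) (1 / (Real.exp 1 - 1))) :
    0 ≤ ∑ r ∈ Finset.range (B + 1),
      (B.choose r : ℝ) * x ^ r * (V / (1 + V * (r : ℝ) * ST)) *
        (((r : ℝ) * (1 + x) - x * (B : ℝ)) ^ 2 - (r : ℝ) * (1 + x) +
          ((r : ℝ) * (1 + x) - x * (B : ℝ)) * x) := by
  have hx0 : 0 ≤ x := hx.1
  rcases B with _ | B'
  · omega
  rcases B' with _ | m
  · -- B = 1
    rw [Finset.sum_range_succ, Finset.sum_range_succ]
    norm_num
    ring_nf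
    norm_num
  · -- B = m + 2
    have h := main_aux V ST x m
    have goal_eq : (∑ r ∈ Finset.range (m+1+1 + 1),
        ((m+1+1).choose r : ℝ) * x ^ r * (V / (1 + V * (r : ℝ) * ST)) *
          (((r : ℝ) * (1 + x) - x * ((m+1+1 : ℕ) : ℝ)) ^ 2 - (r : ℝ) * (1 + x) +
            ((r : ℝ) * (1 + x) - x * ((m+1+1 : ℕ) : ℝ)) * x))
        = ∑ k ∈ Finset.range (m+1),
            Af m x k * (nuf V ST k - 2 * nuf V ST (k+1) + nuf V ST (k+2)) := h
    rw [goal_eq]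
    apply Finset.sum_nonneg
    intro k _
    exact mul_nonneg (Af_nonneg m x hx0 k) (convex_nuf V ST hV0 hST k)
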